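/- Let A be the 3×3 complex Jordan block with eigenvalue 0, i.e. the matrix with entries A₁₂ = A₂₃ = 1 and all other entries 0. Let 0 < r ≤ 1. Then sSup { ‖p(A)‖ : p a complex polynomial with sup_{z ∈ closedBall(0,r)} |p(z)| ≤ 1 } = 1/r², where p(A) denotes the evaluation of p at A and ‖·‖ is the ℓ² operator norm. In particular, for every polynomial p with sup_{|z| ≤ r} |p(z)| ≤ 1 one has ‖p(A)‖ ≤ 1/r², and the polynomial p(z) = z²/r² attains this value. -/

import Mathlib

open Matrix Complex

noncomputable def l2opNorm {n : ℕ} (M : Matrix (Fin n) (Fin n) ℂ) : ℝ :=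
  ‖(Matrix.toEuclideanCLM (𝕜 := ℂ) M : EuclideanSpace ℂ (Fin n) →L[ℂ] EuclideanSpace ℂ (Fin n))‖

open Polynomial Finset

set_option maxHeartbeats 1000000


open Polynomial Finset Complex

noncomputable def zet (m : ℕ) : ℂ := Complex.exp (2 * Real.pi * Complex.I / m)

lemma zet_prim (m : ℕ) (hm : m ≠ 0) : IsPrimitiveRoot (zet m) m :=
  Complex.isPrimitiveRoot_exp m hm

lemma zet_abs (m : ℕ) : ‖zet m‖ = 1 := by
  rw [zet, Complex.norm_exp]
  norm_num [Complex.div_re]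

lemma zet_conj_pow (m : ℕ) (n : ℕ) :
    (starRingEnd ℂ) (zet m ^ n) = (zet m ^ n)⁻¹ := by
  have h : (starRingEnd ℂ) (zet m ^ n) * (zet m ^ n) = 1 := by
    rw [Complex.conj_mul']
    norm_cast
    simp [zet_abs]
  exact eq_inv_of_mul_eq_one_left h

lemma zet_ne (m : ℕ) : zet m ≠ 0 := by
  intro h
  simpa [h] using zet_abs m

lemma orth_aux (m : ℕ) (hm : 1 < m) (j k : ℕ) (hj : j < m) (h : k < j) :
    ∑ t ∈ range m, (zet m ^ t) ^ j * (starRingEnd ℂ) ((zet m ^ t) ^ k) = 0 := by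
  have hprim := zet_prim m (by omega)
  have hterm : ∀ t : ℕ, (zet m ^ t) ^ j * (starRingEnd ℂ) ((zet m ^ t) ^ k)
      = (zet m ^ (j - k)) ^ t := by
    intro t
    rw [← pow_mul, ← pow_mul, zet_conj_pow, ← pow_sub₀ _ (zet_ne m) (by nlinarith),
      ← pow_mul]
    rw [Nat.sub_mul, mul_comm t j, mul_comm t k]
  rw [Finset.sum_congr rfl fun t _ => hterm t]
  have hx1 : zet m ^ (j - k) ≠ 1 :=
    hprim.pow_ne_one_of_pos_of_lt (by omega) (by omega)
  rw [geom_sum_eq hx1, ← pow_mul, mul_comm (j-k) m, pow_mul, hprim.pow_eq_one]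
  simp

lemma orth (m : ℕ) (hm : 1 < m) (j k : ℕ) (hj : j < m) (hk : k < m) :
    ∑ t ∈ range m, (zet m ^ t) ^ j * (starRingEnd ℂ) ((zet m ^ t) ^ k)
      = if j = k then (m : ℂ) else 0 := by
  rcases lt_trichotomy j k with h | h | h
  · rw [if_neg (by omega)]
    have := orth_aux m hm k j hk h
    calc ∑ t ∈ range m, (zet m ^ t) ^ j * (starRingEnd ℂ) ((zet m ^ t) ^ k)
        = (starRingEnd ℂ) (∑ t ∈ range m, (zet m ^ t) ^ k * (starRingEnd ℂ) ((zet m ^ t) ^ j)) := by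
          rw [_root_.map_sum]
          exact Finset.sum_congr rfl fun t _ => by
            rw [_root_.map_mul, Complex.conj_conj, mul_comm]
      _ = 0 := by rw [this, map_zero]
  · subst h
    rw [if_pos rfl]
    have hterm : ∀ t : ℕ, (zet m ^ t) ^ j * (starRingEnd ℂ) ((zet m ^ t) ^ j) = 1 := by
      intro t
      rw [mul_comm, Complex.conj_mul']
      norm_cast
      simp [norm_pow, zet_abs]
    rw [Finset.sum_congr rfl fun t _ => hterm t]
    simp
  · rw [if_neg (by omega)]
    exact orth_aux m hm j k hj h

lemma par_complex (P : ℂ[X]) (m : ℕ) (hm : P.natDegree < m) (hm1 : 1 < m) :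
    ∑ t ∈ range m, (P.eval (zet m ^ t) * (starRingEnd ℂ) (P.eval (zet m ^ t)))
    = m * ∑ j ∈ range m, (P.coeff j * (starRingEnd ℂ) (P.coeff j)) := by
  have hev : ∀ t : ℕ, P.eval (zet m ^ t) = ∑ j ∈ range m, P.coeff j * (zet m ^ t) ^ j :=
    fun t => eval_eq_sum_range' hm _
  calc ∑ t ∈ range m, (P.eval (zet m ^ t) * (starRingEnd ℂ) (P.eval (zet m ^ t)))
      = ∑ t ∈ range m, ∑ j ∈ range m, ∑ k ∈ range m,
          (P.coeff j * (starRingEnd ℂ) (P.coeff k)) *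
            ((zet m ^ t) ^ j * (starRingEnd ℂ) ((zet m ^ t) ^ k)) := by
        refine Finset.sum_congr rfl fun t _ => ?_
        rw [hev t, map_sum, Finset.sum_mul_sum]
        refine Finset.sum_congr rfl fun j _ => Finset.sum_congr rfl fun k _ => ?_
        rw [_root_.map_mul]; ring
    _ = ∑ j ∈ range m, ∑ k ∈ range m, (P.coeff j * (starRingEnd ℂ) (P.coeff k)) *
          ∑ t ∈ range m, ((zet m ^ t) ^ j * (starRingEnd ℂ) ((zet m ^ t) ^ k)) := by
        rw [Finset.sum_comm]
        refine Finset.sum_congr rfl fun j _ => ?_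
        rw [Finset.sum_comm]
        exact Finset.sum_congr rfl fun k _ => (Finset.mul_sum _ _ _).symm
    _ = ∑ j ∈ range m, (P.coeff j * (starRingEnd ℂ) (P.coeff j)) * m := by
        refine Finset.sum_congr rfl fun j hj => ?_
        have h1 : ∀ k ∈ range m, (P.coeff j * (starRingEnd ℂ) (P.coeff k)) *
            ∑ t ∈ range m, ((zet m ^ t) ^ j * (starRingEnd ℂ) ((zet m ^ t) ^ k))
            = if j = k then (P.coeff j * (starRingEnd ℂ) (P.coeff k)) * m else 0 := by
          intro k hk
          rw [orth m hm1 j k (Finset.mem_range.1 hj) (Finset.mem_range.1 hk)]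
          split <;> simp
        rw [Finset.sum_congr rfl h1, Finset.sum_ite_eq (range m) j
          (fun k => (P.coeff j * (starRingEnd ℂ) (P.coeff k)) * m), if_pos hj]
    _ = m * ∑ j ∈ range m, (P.coeff j * (starRingEnd ℂ) (P.coeff j)) := by
        rw [← Finset.sum_mul, mul_comm]

lemma par (P : ℂ[X]) (m : ℕ) (hm : P.natDegree < m) (hm1 : 1 < m) :
    ∑ t ∈ range m, Complex.normSq (P.eval (zet m ^ t))
    = m * ∑ j ∈ range m, Complex.normSq (P.coeff j) := by
  have h := par_complex P m hm hm1
  have h2 : ((∑ t ∈ range m, Complex.normSq (P.eval (zet m ^ t)) : ℝ) : ℂ)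
      = ((m * ∑ j ∈ range m, Complex.normSq (P.coeff j) : ℝ) : ℂ) := by
    push_cast
    simpa only [Complex.mul_conj] using h
  exact_mod_cast h2

lemma coeff_comp_C_mul_X (p : ℂ[X]) (s : ℂ) (n : ℕ) :
    (p.comp (C s * X)).coeff n = s ^ n * p.coeff n := by
  induction p using Polynomial.induction_on' with
  | add u v hu hv => simp [add_comp, hu, hv, mul_add]
  | monomial k a =>
    rw [monomial_comp, mul_pow, ← C_pow, ← mul_assoc, ← C_mul, coeff_C_mul, coeff_X_pow,
      coeff_monomial]
    rcases eq_or_ne n k with h | h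
    · subst h; simp [mul_comm]
    · simp [if_neg h, if_neg (Ne.symm h)]

noncomputable def Amat : Matrix (Fin 3) (Fin 3) ℂ := !![0, 1, 0; 0, 0, 1; 0, 0, 0]

lemma A3 : Amat ^ 3 = 0 := by
  ext i j
  fin_cases i <;> fin_cases j <;>
    simp [Amat, pow_succ, Matrix.mul_apply, Fin.sum_univ_three, Matrix.vecHead, Matrix.vecTail]

lemma aeval_A_eq (u : ℂ[X]) : Polynomial.aeval Amat u =
    !![u.coeff 0, u.coeff 1, u.coeff 2; 0, u.coeff 0, u.coeff 1; 0, 0, u.coeff 0] := by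
  induction u using Polynomial.induction_on' with
  | add p q hp hq =>
    rw [map_add, hp, hq]
    ext i j
    fin_cases i <;> fin_cases j <;> simp [Matrix.vecHead, Matrix.vecTail]
  | monomial k a =>
    rw [aeval_monomial]
    match k with
    | 0 => ext i j; fin_cases i <;> fin_cases j <;>
        simp [Amat, Matrix.mul_apply, Fin.sum_univ_three, Matrix.algebraMap_matrix_apply,
          coeff_monomial, Matrix.vecHead, Matrix.vecTail]
    | 1 => ext i j; fin_cases i <;> fin_cases j <;>
        simp [Amat, Matrix.mul_apply, Fin.sum_univ_three, Matrix.algebraMap_matrix_apply,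
          coeff_monomial, Matrix.vecHead, Matrix.vecTail]
    | 2 => ext i j; fin_cases i <;> fin_cases j <;>
        simp [Amat, pow_succ, Matrix.mul_apply, Fin.sum_univ_three,
          Matrix.algebraMap_matrix_apply, coeff_monomial, Matrix.vecHead, Matrix.vecTail]
    | (l+3) =>
      have h0 : Amat ^ (l + 3) = 0 := by
        rw [add_comm, pow_add, A3, zero_mul]
      rw [h0, mul_zero]
      ext i j
      fin_cases i <;> fin_cases j <;> simp [coeff_monomial, Matrix.vecHead, Matrix.vecTail]


lemma euc_norm (x : EuclideanSpace ℂ (Fin 3)) :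
    ‖x‖ = Real.sqrt (∑ i, Complex.normSq (x i)) := by
  rw [EuclideanSpace.norm_eq]
  congr 1
  exact Finset.sum_congr rfl fun i _ => by rw [← Complex.sq_norm]

lemma core (q : ℂ[X]) (hq : ∀ z : ℂ, ‖z‖ = 1 → ‖q.eval z‖ ≤ 1) :
    l2opNorm (Polynomial.aeval Amat q) ≤ 1 := by
  apply ContinuousLinearMap.opNorm_le_bound _ zero_le_one
  intro x
  rw [one_mul]
  set m : ℕ := q.natDegree + 3 with hmdef
  have hm1 : 1 < m := by omega
  set Xp : ℂ[X] := C (x 2) + C (x 1) * X ^ 1 + C (x 0) * X ^ 2 with hXp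
  set PR : ℂ[X] := q * Xp with hPRdef
  have hXpco : ∀ n : ℕ, Xp.coeff n =
      (if n = 0 then x 2 else 0) + (if n = 1 then x 1 else 0) + (if n = 2 then x 0 else 0) := by
    intro n
    match n with
    | 0 => simp [hXp]
    | 1 => simp [hXp]
    | 2 => simp [hXp]
    | (l+3) => simp [hXp, coeff_add, coeff_C_mul, coeff_C, coeff_X_pow, coeff_X]
  have hXdeg : Xp.natDegree < m := by
    have : Xp.natDegree ≤ 2 := by rw [hXp]; compute_degree
    omega
  have hPRdeg : PR.natDegree < m := by
    have h1 : PR.natDegree ≤ q.natDegree + Xp.natDegree := natDegree_mul_le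
    have : Xp.natDegree ≤ 2 := by rw [hXp]; compute_degree
    omega
  have hPRco : ∀ n : ℕ, PR.coeff n = q.coeff n * x 2 +
      ((if 1 ≤ n then q.coeff (n - 1) * x 1 else 0) +
       (if 2 ≤ n then q.coeff (n - 2) * x 0 else 0)) := by
    intro n
    have hsplit : PR = q * C (x 2) + ((q * C (x 1)) * X ^ 1 + (q * C (x 0)) * X ^ 2) := by
      rw [hPRdef, hXp]; ring
    rw [hsplit, coeff_add, coeff_add, coeff_mul_C, coeff_mul_X_pow', coeff_mul_X_pow']
    split_ifs <;> simp [coeff_mul_C]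
  have hT := aeval_A_eq q
  have e0 : ((Polynomial.aeval Amat q).mulVec x) 0 = PR.coeff 2 := by
    rw [hT, hPRco]
    simp [Matrix.mulVec, dotProduct, Fin.sum_univ_three]
    ring
  have e1 : ((Polynomial.aeval Amat q).mulVec x) 1 = PR.coeff 1 := by
    rw [hT, hPRco]
    simp [Matrix.mulVec, dotProduct, Fin.sum_univ_three, Matrix.vecHead, Matrix.vecTail]
    ring
  have e2 : ((Polynomial.aeval Amat q).mulVec x) 2 = PR.coeff 0 := by
    rw [hT, hPRco]
    simp [Matrix.mulVec, dotProduct, Fin.sum_univ_three, Matrix.vecHead, Matrix.vecTail]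
  have key : ∑ i : Fin 3, Complex.normSq ((Polynomial.aeval Amat q).mulVec x i)
      ≤ ∑ i : Fin 3, Complex.normSq (x i) := by
    have hmpos : (0:ℝ) < m := by positivity
    have h3m : ∑ j ∈ range 3, Complex.normSq (PR.coeff j)
        ≤ ∑ j ∈ range m, Complex.normSq (PR.coeff j) :=
      Finset.sum_le_sum_of_subset_of_nonneg (Finset.range_subset_range.2 (by omega))
        (fun _ _ _ => Complex.normSq_nonneg _)
    have hq1 : ∑ t ∈ range m, Complex.normSq (PR.eval (zet m ^ t))
        ≤ ∑ t ∈ range m, Complex.normSq (Xp.eval (zet m ^ t)) := by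
      apply Finset.sum_le_sum
      intro t _
      rw [hPRdef, eval_mul, Complex.normSq_mul]
      have habs : ‖zet m ^ t‖ = 1 := by rw [norm_pow, zet_abs, one_pow]
      have h1 := hq _ habs
      have h2 : Complex.normSq (q.eval (zet m ^ t)) ≤ 1 := by
        rw [Complex.normSq_eq_norm_sq]
        nlinarith [norm_nonneg (q.eval (zet m ^ t))]
      nlinarith [Complex.normSq_nonneg (Xp.eval (zet m ^ t)),
        Complex.normSq_nonneg (q.eval (zet m ^ t))]
    have hXs : ∑ j ∈ range m, Complex.normSq (Xp.coeff j)
        = ∑ j ∈ range 3, Complex.normSq (Xp.coeff j) := by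
      symm
      apply Finset.sum_subset (Finset.range_subset_range.2 (by omega))
      intro j _ hj3
      have hj : ¬ (j < 3) := by simpa using hj3
      have : Xp.coeff j = 0 := by
        rw [hXpco, if_neg (by omega), if_neg (by omega), if_neg (by omega)]
        simp
      simp [this]
    have pPR := par PR m hPRdeg hm1
    have pXp := par Xp m hXdeg hm1
    have hmain : ∑ j ∈ range m, Complex.normSq (PR.coeff j)
        ≤ ∑ j ∈ range m, Complex.normSq (Xp.coeff j) := by
      rw [pPR, pXp] at hq1
      exact le_of_mul_le_mul_left hq1 hmpos
    have hfin : ∑ j ∈ range 3, Complex.normSq (PR.coeff j)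
        ≤ ∑ j ∈ range 3, Complex.normSq (Xp.coeff j) := by
      calc ∑ j ∈ range 3, Complex.normSq (PR.coeff j)
          ≤ ∑ j ∈ range m, Complex.normSq (PR.coeff j) := h3m
        _ ≤ ∑ j ∈ range m, Complex.normSq (Xp.coeff j) := hmain
        _ = ∑ j ∈ range 3, Complex.normSq (Xp.coeff j) := hXs
    have hx0 : Xp.coeff 0 = x 2 := by rw [hXpco]; norm_num
    have hx1 : Xp.coeff 1 = x 1 := by rw [hXpco]; norm_num
    have hx2 : Xp.coeff 2 = x 0 := by rw [hXpco]; norm_num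
    rw [Fin.sum_univ_three, Fin.sum_univ_three, e0, e1, e2]
    rw [Finset.sum_range_succ, Finset.sum_range_succ, Finset.sum_range_one,
      Finset.sum_range_succ, Finset.sum_range_succ, Finset.sum_range_one,
      hx0, hx1, hx2] at hfin
    linarith
  calc ‖(Matrix.toEuclideanCLM (𝕜 := ℂ) (Polynomial.aeval Amat q)) x‖
      = Real.sqrt (∑ i : Fin 3, Complex.normSq ((Polynomial.aeval Amat q).mulVec x i)) :=
        euc_norm _
    _ ≤ Real.sqrt (∑ i : Fin 3, Complex.normSq (x i)) := Real.sqrt_le_sqrt key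
    _ = ‖x‖ := (euc_norm x).symm


lemma l2opNorm_diag_le (d : Fin 3 → ℂ) (Cb : ℝ) (hC : 0 ≤ Cb)
    (h : ∀ i, ‖d i‖ ≤ Cb) : l2opNorm (Matrix.diagonal d) ≤ Cb := by
  apply ContinuousLinearMap.opNorm_le_bound _ hC
  intro x
  have hterm : ∀ i : Fin 3, Complex.normSq ((Matrix.diagonal d).mulVec x i)
      ≤ Cb ^ 2 * Complex.normSq (x i) := by
    intro i
    rw [Matrix.mulVec_diagonal, Complex.normSq_mul]
    have h1 : Complex.normSq (d i) ≤ Cb ^ 2 := by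
      rw [Complex.normSq_eq_norm_sq]
      nlinarith [norm_nonneg (d i), h i]
    nlinarith [Complex.normSq_nonneg (x i)]
  calc ‖(Matrix.toEuclideanCLM (𝕜 := ℂ) (Matrix.diagonal d)) x‖
      = Real.sqrt (∑ i : Fin 3, Complex.normSq ((Matrix.diagonal d).mulVec x i)) := euc_norm _
    _ ≤ Real.sqrt (∑ i : Fin 3, Cb ^ 2 * Complex.normSq (x i)) :=
        Real.sqrt_le_sqrt (Finset.sum_le_sum fun i _ => hterm i)
    _ = Cb * ‖x‖ := by
        rw [← Finset.mul_sum, Real.sqrt_mul (sq_nonneg Cb), euc_norm x, Real.sqrt_sq hC]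

lemma upper (r : ℝ) (hr0 : 0 < r) (hr1 : r ≤ 1) (p : ℂ[X])
    (hp : ∀ z ∈ Metric.closedBall (0:ℂ) r, ‖p.eval z‖ ≤ 1) :
    l2opNorm (Polynomial.aeval Amat p) ≤ 1 / r ^ 2 := by
  set q := p.comp (C (r:ℂ) * X) with hqdef
  have hq : ∀ z : ℂ, ‖z‖ = 1 → ‖q.eval z‖ ≤ 1 := by
    intro z hz
    rw [hqdef, eval_comp, eval_mul, eval_C, eval_X]
    apply hp
    rw [Metric.mem_closedBall, Complex.dist_eq, sub_zero, norm_mul, hz, mul_one,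
      Complex.norm_real, Real.norm_of_nonneg hr0.le]
  have hco : ∀ k, q.coeff k = (r:ℂ) ^ k * p.coeff k := fun k => coeff_comp_C_mul_X p _ k
  have hrne : (r:ℂ) ≠ 0 := by
    simpa using hr0.ne'
  have hfact : Polynomial.aeval Amat p =
      Matrix.diagonal ![1, (r:ℂ), (r:ℂ)^2] * (Polynomial.aeval Amat q) *
        Matrix.diagonal ![1, (r:ℂ)⁻¹, ((r:ℂ)^2)⁻¹] := by
    rw [aeval_A_eq, aeval_A_eq, hco, hco, hco]
    ext i j
    fin_cases i <;> fin_cases j <;>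
      simp [Matrix.mul_apply, Fin.sum_univ_three, Matrix.vecHead, Matrix.vecTail] <;>
      field_simp <;> ring
  have habsr : ‖((r:ℝ) : ℂ)‖ = r := by
    rw [Complex.norm_real, Real.norm_of_nonneg hr0.le]
  have hD : l2opNorm (Matrix.diagonal ![1, (r:ℂ), (r:ℂ)^2]) ≤ 1 := by
    apply l2opNorm_diag_le _ _ zero_le_one
    intro i
    fin_cases i
    · simp
    · simpa [habsr, abs_of_pos hr0] using hr1
    · show ‖(r:ℂ)^2‖ ≤ 1
      rw [norm_pow, habsr]
      nlinarith
  have hDinv : l2opNorm (Matrix.diagonal ![1, (r:ℂ)⁻¹, ((r:ℂ)^2)⁻¹]) ≤ 1 / r ^ 2 := by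
    apply l2opNorm_diag_le _ _ (by positivity)
    intro i
    have h1 : (1:ℝ) ≤ 1 / r ^ 2 := by
      rw [le_div_iff₀ (by positivity)]
      nlinarith
    fin_cases i
    · simpa using h1
    · show ‖((r:ℂ))⁻¹‖ ≤ 1 / r ^ 2
      rw [norm_inv, habsr, one_div]
      apply inv_anti₀ (by positivity)
      nlinarith
    · show ‖((r:ℂ)^2)⁻¹‖ ≤ 1 / r ^ 2
      rw [norm_inv, norm_pow, habsr, one_div]
  have hcore : l2opNorm (Polynomial.aeval Amat q) ≤ 1 := core q hq
  have hmul : l2opNorm (Polynomial.aeval Amat p) ≤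
      l2opNorm (Matrix.diagonal ![1, (r:ℂ), (r:ℂ)^2]) * l2opNorm (Polynomial.aeval Amat q) *
      l2opNorm (Matrix.diagonal ![1, (r:ℂ)⁻¹, ((r:ℂ)^2)⁻¹]) := by
    rw [hfact]
    unfold l2opNorm
    rw [_root_.map_mul, _root_.map_mul]
    exact le_trans (norm_mul_le _ _)
      (mul_le_mul_of_nonneg_right (norm_mul_le _ _) (norm_nonneg _))
  have hn1 : (0:ℝ) ≤ l2opNorm (Polynomial.aeval Amat q) := norm_nonneg _
  have hn2 : (0:ℝ) ≤ l2opNorm (Matrix.diagonal ![1, (r:ℂ)⁻¹, ((r:ℂ)^2)⁻¹]) := norm_nonneg _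
  calc l2opNorm (Polynomial.aeval Amat p) ≤ _ := hmul
    _ ≤ 1 * 1 * (1 / r ^ 2) :=
        mul_le_mul (mul_le_mul hD hcore hn1 zero_le_one) hDinv hn2 (by norm_num)
    _ = 1 / r ^ 2 := by ring
lemma att (r : ℝ) (hr0 : 0 < r) :
    l2opNorm (Polynomial.aeval Amat (Polynomial.C (1 / (r:ℂ) ^ 2) * Polynomial.X ^ 2))
      = 1 / r ^ 2 := by
  set s : ℂ := 1 / (r:ℂ) ^ 2 with hs
  have hrne : (r:ℂ) ≠ 0 := by simpa using hr0.ne'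
  have habs_s : ‖s‖ = 1 / r ^ 2 := by
    rw [hs, norm_div]
    simp [norm_pow, Complex.norm_real, Real.norm_eq_abs, _root_.abs_of_pos hr0]
  have hco : Polynomial.aeval Amat (Polynomial.C s * Polynomial.X ^ 2)
      = !![0, 0, s; 0, 0, 0; 0, 0, 0] := by
    rw [aeval_A_eq]
    norm_num
  have hmv : ∀ x : EuclideanSpace ℂ (Fin 3), ∀ i : Fin 3,
      (!![0, 0, s; 0, 0, 0; 0, 0, 0]).mulVec x i = if i = 0 then s * x 2 else 0 := by
    intro x i
    fin_cases i <;>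
      simp [Matrix.mulVec, dotProduct, Fin.sum_univ_three, Matrix.vecHead, Matrix.vecTail]
  have hnorm : ∀ x : EuclideanSpace ℂ (Fin 3),
      ‖(Matrix.toEuclideanCLM (𝕜 := ℂ) (!![0, 0, s; 0, 0, 0; 0, 0, 0])) x‖
        = ‖s‖ * ‖x 2‖ := by
    intro x
    have h3 : ∑ i : Fin 3, Complex.normSq ((!![0, 0, s; 0, 0, 0; 0, 0, 0]).mulVec x i)
        = Complex.normSq (s * x 2) := by
      rw [Fin.sum_univ_three, hmv x 0, hmv x 1, hmv x 2]
      simp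
    calc ‖(Matrix.toEuclideanCLM (𝕜 := ℂ) (!![0, 0, s; 0, 0, 0; 0, 0, 0])) x‖
        = Real.sqrt (∑ i : Fin 3, Complex.normSq ((!![0, 0, s; 0, 0, 0; 0, 0, 0]).mulVec x i)) :=
          euc_norm _
      _ = ‖s‖ * ‖x 2‖ := by
          rw [h3, ← Complex.sq_norm, Real.sqrt_sq (norm_nonneg _), norm_mul]
  rw [hco]
  apply le_antisymm
  · apply ContinuousLinearMap.opNorm_le_bound _ (by positivity)
    intro x
    rw [hnorm x, habs_s]
    have hx2 : ‖x 2‖ ≤ ‖x‖ := by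
      rw [euc_norm]
      rw [show ‖x 2‖ = Real.sqrt (Complex.normSq (x 2)) by
        rw [← Complex.sq_norm, Real.sqrt_sq (norm_nonneg _)]]
      apply Real.sqrt_le_sqrt
      rw [Fin.sum_univ_three]
      nlinarith [Complex.normSq_nonneg (x 0), Complex.normSq_nonneg (x 1)]
    have : (0:ℝ) ≤ 1 / r ^ 2 := by positivity
    nlinarith
  · have hx : ‖(EuclideanSpace.single (2 : Fin 3) (1:ℂ))‖ = 1 := by
      rw [EuclideanSpace.norm_single, norm_one]
    have h1 := ContinuousLinearMap.le_opNorm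
      (Matrix.toEuclideanCLM (𝕜 := ℂ) (!![0, 0, s; 0, 0, 0; 0, 0, 0]))
      (EuclideanSpace.single (2 : Fin 3) (1:ℂ))
    rw [hx, mul_one, hnorm, EuclideanSpace.single_apply, if_pos rfl, norm_one,
      mul_one, habs_s] at h1
    exact h1

theorem jordan_block_sharp_constant
    (r : ℝ) (hr0 : 0 < r) (hr1 : r ≤ 1)
    (A : Matrix (Fin 3) (Fin 3) ℂ)
    (hA : A = !![0, 1, 0; 0, 0, 1; 0, 0, 0]) :
    sSup {x : ℝ | ∃ p : Polynomial ℂ,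
        (∀ z ∈ Metric.closedBall (0 : ℂ) r, ‖p.eval z‖ ≤ 1) ∧
        x = l2opNorm (Polynomial.aeval A p)} = 1 / r ^ 2 ∧
    (∀ p : Polynomial ℂ,
        (∀ z ∈ Metric.closedBall (0 : ℂ) r, ‖p.eval z‖ ≤ 1) →
        l2opNorm (Polynomial.aeval A p) ≤ 1 / r ^ 2) ∧
    l2opNorm (Polynomial.aeval A
        (Polynomial.C (1 / (r : ℂ) ^ 2) * Polynomial.X ^ 2)) = 1 / r ^ 2 := by
  have hAm : A = Amat := hA
  subst hAm
  have hup : ∀ p : Polynomial ℂ,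
      (∀ z ∈ Metric.closedBall (0 : ℂ) r, ‖p.eval z‖ ≤ 1) →
      l2opNorm (Polynomial.aeval Amat p) ≤ 1 / r ^ 2 := fun p hp => upper r hr0 hr1 p hp
  have hatt := att r hr0
  have hconstraint : ∀ z ∈ Metric.closedBall (0 : ℂ) r,
      ‖(Polynomial.C (1 / (r : ℂ) ^ 2) * Polynomial.X ^ 2).eval z‖ ≤ 1 := by
    intro z hz
    have hzr : ‖z‖ ≤ r := by
      simpa [Complex.dist_eq] using hz
    rw [Polynomial.eval_mul, Polynomial.eval_C, Polynomial.eval_pow, Polynomial.eval_X,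
      norm_mul, norm_pow, norm_div, norm_one, norm_pow, Complex.norm_real,
      Real.norm_of_nonneg hr0.le]
    rw [div_mul_eq_mul_div, one_mul, div_le_one (by positivity)]
    nlinarith [norm_nonneg z]
  have hmem : (1 / r ^ 2) ∈ {x : ℝ | ∃ p : Polynomial ℂ,
      (∀ z ∈ Metric.closedBall (0 : ℂ) r, ‖p.eval z‖ ≤ 1) ∧
      x = l2opNorm (Polynomial.aeval Amat p)} :=
    ⟨Polynomial.C (1 / (r : ℂ) ^ 2) * Polynomial.X ^ 2, hconstraint, hatt.symm⟩
  have hbdd : ∀ x ∈ {x : ℝ | ∃ p : Polynomial ℂ,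
      (∀ z ∈ Metric.closedBall (0 : ℂ) r, ‖p.eval z‖ ≤ 1) ∧
      x = l2opNorm (Polynomial.aeval Amat p)}, x ≤ 1 / r ^ 2 := by
    rintro x ⟨p, hp, rfl⟩
    exact hup p hp
  refine ⟨le_antisymm (csSup_le ⟨_, hmem⟩ hbdd) (le_csSup ⟨1 / r ^ 2, hbdd⟩ hmem), hup, hatt⟩
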